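/- Let V be a 4-dimensional Lorentzian vector space with orthonormal-type basis {u, s, e₁, e₂} where g(u,u) = −1, g(s,s) = 1, and e₁, e₂ spacelike mutually orthogonal to u and s. Suppose ρ + p ≠ 0, n is a covector with n(s) ≠ 0, η = η¹e₁ + η²e₂ ≠ 0, and the FLRW Riemann tensor R^{RW} (as in the perfect-fluid formula with flow vector u) satisfies R^{RW}(ζ,η,η,v) = R^{sx}(ζ,η,η,v) + (correction by B terms annihilated since n(ζ)=n(η)=n(v)=0) = 0, where ζ = F cosh β u − F sinh β cos α s + c¹e₁ + c²e₂ with c^A satisfying h_{AB}c^Aη^B = 0, and v is constructed so that g(u,v) = −(h_{CD}c^Cc^D) n(s)/(F cosh β) and g(η,v) = 0, g(ζ,v)=0. Then (ρ+p)/2 · n(s) · (h_{CD}c^Cc^D) · (h_{AB}η^Aη^B) = 0, and consequently c¹ = c² = 0. -/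

import Mathlib

/-- The algebraic core of eq. (main1): with the FLRW Riemann tensor,
`ζ = F cosh β u − F sinh β cos α s + c¹e₁ + c²e₂`, `η = η¹e₁ + η²e₂ ≠ 0`,
`h_{AB} c^A η^B = 0`, and `v` satisfying `g(u,v) = −(h_{CD}c^Cc^D) n(s)/(F cosh β)`,
`g(η,v) = g(ζ,v) = 0`, the vanishing `R(ζ,η,η,v) = 0` gives
`(ρ+p)/2 · n(s) · (h_{CD}c^Cc^D) · (h_{AB}η^Aη^B) = 0` and hence `c¹ = c² = 0`. -/
theorem stmt_5 {V : Type*} [AddCommGroup V] [Module ℝ V]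
    (g : LinearMap.BilinForm ℝ V) (hsymm : ∀ x y, g x y = g y x)
    (u s e1 e2 : V)
    (huu : g u u = -1) (hss : g s s = 1) (hus : g u s = 0)
    (hue1 : g u e1 = 0) (hue2 : g u e2 = 0)
    (hse1 : g s e1 = 0) (hse2 : g s e2 = 0)
    (hpd : ∀ x1 x2 : ℝ, ¬(x1 = 0 ∧ x2 = 0) →
      0 < x1 ^ 2 * g e1 e1 + 2 * x1 * x2 * g e1 e2 + x2 ^ 2 * g e2 e2)
    (ρ p F β α c1 c2 η1 η2 : ℝ)
    (hρp : ρ + p ≠ 0) (hF : 0 < F)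
    (n : Module.Dual ℝ V) (hns : n s ≠ 0)
    (hηnz : ¬(η1 = 0 ∧ η2 = 0))
    (ζ η v : V)
    (hζ : ζ = (F * Real.cosh β) • u - (F * Real.sinh β * Real.cos α) • s
            + c1 • e1 + c2 • e2)
    (hη : η = η1 • e1 + η2 • e2)
    (hcη : g e1 e1 * c1 * η1 + g e1 e2 * (c1 * η2 + c2 * η1) + g e2 e2 * c2 * η2 = 0)
    (hguv : g u v = -((c1 ^ 2 * g e1 e1 + 2 * c1 * c2 * g e1 e2 + c2 ^ 2 * g e2 e2) * n s)
        / (F * Real.cosh β))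
    (hgηv : g η v = 0) (hgζv : g ζ v = 0)
    (R : V → V → V → V → ℝ)
    (hR : ∀ a b m w, R a b m w =
      (ρ + p) / 2 * (g u a * g u m * g b w - g u a * g u w * g b m
        + g u b * g u w * g a m - g u b * g u m * g a w)
      + ρ / 3 * (g a m * g b w - g a w * g b m))
    (hR0 : R ζ η η v = 0) :
    (ρ + p) / 2 * n s * (c1 ^ 2 * g e1 e1 + 2 * c1 * c2 * g e1 e2 + c2 ^ 2 * g e2 e2)
        * (η1 ^ 2 * g e1 e1 + 2 * η1 * η2 * g e1 e2 + η2 ^ 2 * g e2 e2) = 0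
      ∧ c1 = 0 ∧ c2 = 0 := by
  have hcosh : Real.cosh β ≠ 0 := (Real.cosh_pos β).ne'
  have h21 : g e2 e1 = g e1 e2 := hsymm _ _
  have huη : g u η = 0 := by simp [hη, hue1, hue2]
  have huζ : g u ζ = -(F * Real.cosh β) := by
    simp [hζ, huu, hus, hue1, hue2]
  have hηη : g η η = η1 ^ 2 * g e1 e1 + 2 * η1 * η2 * g e1 e2 + η2 ^ 2 * g e2 e2 := by
    simp [hη, h21, smul_eq_mul]; ring
  set C := c1 ^ 2 * g e1 e1 + 2 * c1 * c2 * g e1 e2 + c2 ^ 2 * g e2 e2 with hC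
  set H := η1 ^ 2 * g e1 e1 + 2 * η1 * η2 * g e1 e2 + η2 ^ 2 * g e2 e2 with hH
  have key : (ρ + p) / 2 * n s * C * H = 0 := by
    rw [hR, huζ, huη, hηη, hgηv, hgζv, hguv] at hR0
    field_simp at hR0
    have hFc : F * Real.cosh β ≠ 0 := mul_ne_zero hF.ne' hcosh
    have hmul : (ρ + p) / 2 * n s * C * H * (F * Real.cosh β) = 0 := by
      linear_combination (-1/6) * hR0
    exact (mul_eq_zero.mp hmul).resolve_right hFc
  have hHpos : 0 < H := hpd η1 η2 hηnz
  have h1 : (ρ + p) / 2 ≠ 0 := div_ne_zero hρp two_ne_zero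
  have hCzero : C = 0 := by
    rcases mul_eq_zero.mp key with h | h
    · rcases mul_eq_zero.mp h with h' | h'
      · exact absurd h' (mul_ne_zero h1 hns)
      · exact h'
    · exact absurd h hHpos.ne'
  refine ⟨key, ?_⟩
  by_contra hcc
  rw [not_and_or] at hcc
  have : ¬(c1 = 0 ∧ c2 = 0) := by tauto
  exact (hpd c1 c2 this).ne' hCzero
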